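/- Let S, L, A, M, Y satisfy Y \perp A | (M, L, S) (the semiparametric restriction of model M_{semi,1}), all on a finite discrete probability space with positivity. Define T1(l,m,s) = E[Y | L=l, M=m, S=s]. Then the identified functional \Psi^a = \sum_{m,l} T1(l,m,0) P(M=m | L=l, A=a, S=1) P(L=l | S=0) admits the inverse-probability-weighting representation: \Psi^a = E[ (1-S)/P(S=0) * (p(M | S=1, A=a, L) / p(M | S=0, L)) * Y ]. -/

import Mathlib

open Finset
open scoped Classical

noncomputable section

/-- Probability of an event under weight function `w`. -/
def Pr {Ω : Type*} [Fintype Ω] (w : Ω → ℝ) (E : Ω → Prop) : ℝ :=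
  ∑ ω, if E ω then w ω else 0

/-- Conditional probability `P(E | F)`. -/
def CP {Ω : Type*} [Fintype Ω] (w : Ω → ℝ) (E F : Ω → Prop) : ℝ :=
  Pr w (fun ω => E ω ∧ F ω) / Pr w F

/-- Conditional expectation `E[X | F]`. -/
def CE {Ω : Type*} [Fintype Ω] (w : Ω → ℝ) (X : Ω → ℝ) (F : Ω → Prop) : ℝ :=
  (∑ ω, if F ω then w ω * X ω else 0) / Pr w F

lemma Pr_congr {Ω : Type*} [Fintype Ω] (w : Ω → ℝ) {E F : Ω → Prop}
    (h : ∀ ω, E ω ↔ F ω) : Pr w E = Pr w F := by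
  unfold Pr
  exact Finset.sum_congr rfl fun ω _ => if_congr (h ω) rfl rfl

lemma Pr_mono {Ω : Type*} [Fintype Ω] (w : Ω → ℝ) (hw0 : ∀ ω, 0 ≤ w ω)
    {E F : Ω → Prop} (h : ∀ ω, E ω → F ω) : Pr w E ≤ Pr w F := by
  unfold Pr
  refine Finset.sum_le_sum fun ω _ => ?_
  by_cases hE : E ω
  · simp [hE, h ω hE]
  · simp only [hE, if_false]
    split_ifs
    · exact hw0 ω
    · exact le_rfl

/-- equivalence of the g-formula (outcome-regression) and
inverse-probability-weighting representations of the transported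
counterfactual mean, under `Y ⟂ A | (M, L, S)`. -/
theorem gformula_ipw_equivalence
    {Ω 𝕃 𝕄 𝔸 : Type*} [Fintype Ω] [Fintype 𝕃] [Fintype 𝕄] [Fintype 𝔸]
    (w : Ω → ℝ) (hw0 : ∀ ω, 0 ≤ w ω) (hw1 : ∑ ω, w ω = 1)
    (S : Ω → ℕ) (L : Ω → 𝕃) (A : Ω → 𝔸) (M : Ω → 𝕄) (Y : Ω → ℝ) (a : 𝔸)
    (hposS0 : Pr w (fun ω => S ω = 0) > 0)
    (hpos : ∀ m l a' s, s = 0 ∨ s = 1 →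
      Pr w (fun ω => S ω = s ∧ M ω = m ∧ L ω = l) > 0 ∧
      Pr w (fun ω => S ω = s ∧ A ω = a' ∧ M ω = m ∧ L ω = l) > 0 ∧
      Pr w (fun ω => S ω = s ∧ A ω = a' ∧ L ω = l) > 0 ∧
      Pr w (fun ω => L ω = l) > 0)
    -- semiparametric restriction Y ⟂ A | (M, L, S)
    (hindep : ∀ (y : ℝ) (m : 𝕄) (l : 𝕃) (a' : 𝔸) (s : ℕ),
      Pr w (fun ω => M ω = m ∧ L ω = l ∧ A ω = a' ∧ S ω = s) > 0 →
      CP w (fun ω => Y ω = y) (fun ω => M ω = m ∧ L ω = l ∧ A ω = a' ∧ S ω = s) =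
      CP w (fun ω => Y ω = y) (fun ω => M ω = m ∧ L ω = l ∧ S ω = s)) :
    (∑ m : 𝕄, ∑ l : 𝕃,
        CE w Y (fun ω => L ω = l ∧ M ω = m ∧ S ω = 0) *
        CP w (fun ω => M ω = m) (fun ω => L ω = l ∧ A ω = a ∧ S ω = 1) *
        CP w (fun ω => L ω = l) (fun ω => S ω = 0)) =
      ∑ ω, w ω *
        ((if S ω = 0 then (1:ℝ) else 0) / Pr w (fun ω' => S ω' = 0)) *
        (CP w (fun ω' => M ω' = M ω) (fun ω' => S ω' = 1 ∧ A ω' = a ∧ L ω' = L ω) /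
         CP w (fun ω' => M ω' = M ω) (fun ω' => S ω' = 0 ∧ L ω' = L ω)) *
        Y ω := by
  classical
  set P0 : ℝ := Pr w (fun ω => S ω = 0) with hP0def
  have hP0 : 0 < P0 := hposS0
  -- the IPW ratio as a function of (m, l)
  set R : 𝕄 → 𝕃 → ℝ := fun m l =>
    CP w (fun ω' => M ω' = m) (fun ω' => S ω' = 1 ∧ A ω' = a ∧ L ω' = l) /
    CP w (fun ω' => M ω' = m) (fun ω' => S ω' = 0 ∧ L ω' = l) with hRdef
  -- the stratified numerator
  set N : 𝕄 → 𝕃 → ℝ := fun m l =>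
    ∑ ω, if S ω = 0 ∧ M ω = m ∧ L ω = l then w ω * Y ω else 0 with hNdef
  -- Step 1: rewrite the RHS as a double sum over (m, l)
  have hRHS : (∑ ω, w ω *
        ((if S ω = 0 then (1:ℝ) else 0) / P0) *
        (R (M ω) (L ω)) * Y ω) =
      ∑ m : 𝕄, ∑ l : 𝕃, N m l * (R m l / P0) := by
    have hpt : ∀ ω, w ω * ((if S ω = 0 then (1:ℝ) else 0) / P0) * (R (M ω) (L ω)) * Y ω
        = ∑ m : 𝕄, ∑ l : 𝕃,
            (if S ω = 0 ∧ M ω = m ∧ L ω = l then w ω * Y ω else 0) * (R m l / P0) := by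
      intro ω
      by_cases h : S ω = 0
      · simp only [h, if_true, true_and]
        rw [Finset.sum_comm]
        rw [Finset.sum_eq_single (L ω)]
        · rw [Finset.sum_eq_single (M ω)]
          · simp; ring
          · intro b _ hb; simp [Ne.symm hb]
          · intro h; exact absurd (Finset.mem_univ _) h
        · intro b _ hb
          apply Finset.sum_eq_zero; intro m _
          simp [Ne.symm hb]
        · intro h; exact absurd (Finset.mem_univ _) h
      · simp [h]
    rw [Finset.sum_congr rfl fun ω _ => hpt ω]
    rw [Finset.sum_comm]
    refine Finset.sum_congr rfl fun m _ => ?_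
    rw [Finset.sum_comm]
    refine Finset.sum_congr rfl fun l _ => ?_
    rw [← Finset.sum_mul]
  -- Step 2: rewrite the LHS termwise
  have hLHS : ∀ (m : 𝕄) (l : 𝕃),
      CE w Y (fun ω => L ω = l ∧ M ω = m ∧ S ω = 0) *
        CP w (fun ω => M ω = m) (fun ω => L ω = l ∧ A ω = a ∧ S ω = 1) *
        CP w (fun ω => L ω = l) (fun ω => S ω = 0) = N m l * (R m l / P0) := by
    intro m l
    have hPml : 0 < Pr w (fun ω => S ω = 0 ∧ M ω = m ∧ L ω = l) :=
      (hpos m l a 0 (Or.inl rfl)).1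
    have hPl0 : 0 < Pr w (fun ω => S ω = 0 ∧ L ω = l) :=
      lt_of_lt_of_le hPml (Pr_mono w hw0 fun ω h => ⟨h.1, h.2.2⟩)
    -- identify all the pieces
    have e1 : Pr w (fun ω => L ω = l ∧ M ω = m ∧ S ω = 0)
        = Pr w (fun ω => S ω = 0 ∧ M ω = m ∧ L ω = l) :=
      Pr_congr w (by tauto)
    have e2 : (∑ ω, if L ω = l ∧ M ω = m ∧ S ω = 0 then w ω * Y ω else 0) = N m l := by
      rw [hNdef]
      exact Finset.sum_congr rfl fun ω _ => if_congr (by tauto) rfl rfl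
    have e3 : CP w (fun ω => M ω = m) (fun ω => L ω = l ∧ A ω = a ∧ S ω = 1)
        = CP w (fun ω' => M ω' = m) (fun ω' => S ω' = 1 ∧ A ω' = a ∧ L ω' = l) := by
      unfold CP
      rw [Pr_congr w (E := fun ω => M ω = m ∧ (L ω = l ∧ A ω = a ∧ S ω = 1))
        (F := fun ω => M ω = m ∧ (S ω = 1 ∧ A ω = a ∧ L ω = l)) (by tauto),
        Pr_congr w (E := fun ω => L ω = l ∧ A ω = a ∧ S ω = 1)
        (F := fun ω => S ω = 1 ∧ A ω = a ∧ L ω = l) (by tauto)]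
    have e4 : CP w (fun ω => L ω = l) (fun ω => S ω = 0)
        = Pr w (fun ω => S ω = 0 ∧ L ω = l) / P0 := by
      unfold CP
      rw [Pr_congr w (E := fun ω => L ω = l ∧ S ω = 0)
        (F := fun ω => S ω = 0 ∧ L ω = l) (by tauto)]
    have e5 : CP w (fun ω' => M ω' = m) (fun ω' => S ω' = 0 ∧ L ω' = l)
        = Pr w (fun ω => S ω = 0 ∧ M ω = m ∧ L ω = l)
          / Pr w (fun ω => S ω = 0 ∧ L ω = l) := by
      unfold CP
      rw [Pr_congr w (E := fun ω => M ω = m ∧ (S ω = 0 ∧ L ω = l))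
        (F := fun ω => S ω = 0 ∧ M ω = m ∧ L ω = l) (by tauto)]
    unfold CE
    simp only [e1, e2, e3, e4, hRdef, e5]
    field_simp
    rw [e2, mul_comm]
  calc (∑ m : 𝕄, ∑ l : 𝕃,
        CE w Y (fun ω => L ω = l ∧ M ω = m ∧ S ω = 0) *
        CP w (fun ω => M ω = m) (fun ω => L ω = l ∧ A ω = a ∧ S ω = 1) *
        CP w (fun ω => L ω = l) (fun ω => S ω = 0))
      = ∑ m : 𝕄, ∑ l : 𝕃, N m l * (R m l / P0) := by
        exact Finset.sum_congr rfl fun m _ => Finset.sum_congr rfl fun l _ => hLHS m l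
    _ = ∑ ω, w ω * ((if S ω = 0 then (1:ℝ) else 0) / P0) * (R (M ω) (L ω)) * Y ω :=
        hRHS.symm
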